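/- Let x, x̃, s, s̃ ∈ ℝⁿ and let A and B be symmetric positive-definite n×n real matrices with A s = B s = x and A s̃ = B s̃ = x̃. Let G := A^{1/2} (A^{-1/2} B A^{-1/2})^{1/2} A^{1/2} be the operator geometric mean of A and B, where M^{1/2} denotes the unique symmetric positive-definite square root. Then G is symmetric positive definite and satisfies G s = x and G s̃ = x̃. -/

import Mathlib

open Matrix

open Classical in
/-- The unique symmetric positive-semidefinite square root of a positive
semidefinite matrix (junk value `0` otherwise). -/
noncomputable def msqrt {n : ℕ} (M : Matrix (Fin n) (Fin n) ℝ) :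
    Matrix (Fin n) (Fin n) ℝ :=
  if h : M.PosSemidef then
    h.1.eigenvectorUnitary.1 * diagonal ((↑) ∘ (√·) ∘ h.1.eigenvalues) *
      (star h.1.eigenvectorUnitary : Matrix (Fin n) (Fin n) ℝ) else 0

open Classical in
lemma msqrt_eq {n : ℕ} {M : Matrix (Fin n) (Fin n) ℝ} (h : M.PosSemidef) :
    msqrt M = h.1.eigenvectorUnitary.1 * diagonal ((↑) ∘ (√·) ∘ h.1.eigenvalues) *
      (star h.1.eigenvectorUnitary : Matrix (Fin n) (Fin n) ℝ) := dif_pos h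

lemma msqrt_posSemidef {n : ℕ} {M : Matrix (Fin n) (Fin n) ℝ} (h : M.PosSemidef) :
    (msqrt M).PosSemidef := by
  rw [msqrt_eq h]
  have hD : (diagonal ((↑) ∘ (√·) ∘ h.1.eigenvalues : Fin n → ℝ)).PosSemidef := by
    rw [posSemidef_diagonal_iff]
    intro i
    exact Real.sqrt_nonneg _
  have := hD.mul_mul_conjTranspose_same h.1.eigenvectorUnitary.1
  simpa [star_eq_conjTranspose] using this

lemma msqrt_mul_self {n : ℕ} {M : Matrix (Fin n) (Fin n) ℝ} (h : M.PosSemidef) :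
    msqrt M * msqrt M = M := by
  rw [msqrt_eq h]
  have hU : (star h.1.eigenvectorUnitary : Matrix (Fin n) (Fin n) ℝ) *
      h.1.eigenvectorUnitary.1 = 1 := Matrix.UnitaryGroup.star_mul_self _
  have hDD : diagonal ((↑) ∘ (√·) ∘ h.1.eigenvalues : Fin n → ℝ) *
      diagonal ((↑) ∘ (√·) ∘ h.1.eigenvalues : Fin n → ℝ) =
      diagonal ((↑) ∘ h.1.eigenvalues : Fin n → ℝ) := by
    rw [diagonal_mul_diagonal]
    congr 1
    funext i
    simp [Real.mul_self_sqrt (h.eigenvalues_nonneg i)]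
  calc _ = h.1.eigenvectorUnitary.1 * (diagonal ((↑) ∘ (√·) ∘ h.1.eigenvalues : Fin n → ℝ) *
        ((star h.1.eigenvectorUnitary : Matrix (Fin n) (Fin n) ℝ) *
          h.1.eigenvectorUnitary.1) *
        diagonal ((↑) ∘ (√·) ∘ h.1.eigenvalues : Fin n → ℝ)) *
        (star h.1.eigenvectorUnitary : Matrix (Fin n) (Fin n) ℝ) := by
          simp only [mul_assoc]
    _ = M := by
      rw [hU, mul_one, hDD]
      conv_rhs => rw [h.1.spectral_theorem]
      simp
      rfl

lemma posDef_of_posSemidef_det_ne_zero {n : ℕ} {M : Matrix (Fin n) (Fin n) ℝ}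
    (hM : M.PosSemidef) (hdet : M.det ≠ 0) : M.PosDef := by
  refine PosDef.of_dotProduct_mulVec_pos hM.1 (fun x hx => ?_)
  rcases (hM.dotProduct_mulVec_nonneg x).lt_or_eq with h | h
  · exact h
  · exact absurd (Matrix.eq_zero_of_mulVec_eq_zero hdet
      ((hM.dotProduct_mulVec_zero_iff x).mp h.symm)) hx

lemma msqrt_det_ne_zero {n : ℕ} {M : Matrix (Fin n) (Fin n) ℝ} (hM : M.PosDef) :
    (msqrt M).det ≠ 0 := by
  intro h
  have : M.det = 0 := by
    rw [← msqrt_mul_self hM.posSemidef, det_mul, h, mul_zero]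
  exact hM.det_pos.ne' this

lemma msqrt_posDef {n : ℕ} {M : Matrix (Fin n) (Fin n) ℝ} (hM : M.PosDef) :
    (msqrt M).PosDef :=
  posDef_of_posSemidef_det_ne_zero (msqrt_posSemidef hM.posSemidef) (msqrt_det_ne_zero hM)

/-- If `M` is positive semidefinite and `(M*M) v = v`, then `M v = v`. -/
lemma sqrt_fixed {n : ℕ} {M : Matrix (Fin n) (Fin n) ℝ} (hM : M.PosSemidef)
    {v : Fin n → ℝ} (h : (M * M) *ᵥ v = v) : M *ᵥ v = v := by
  have h1 : (M + 1).PosDef := Matrix.PosDef.posSemidef_add hM Matrix.PosDef.one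
  have key : (M + 1) *ᵥ (M *ᵥ v - v) = 0 := by
    rw [mulVec_sub, add_mulVec, add_mulVec, one_mulVec, one_mulVec, mulVec_mulVec, h]
    abel
  have := Matrix.eq_zero_of_mulVec_eq_zero h1.det_pos.ne' key
  exact sub_eq_zero.mp this

lemma gen_vec {n : ℕ} {P Bm C : Matrix (Fin n) (Fin n) ℝ} (hP : P.PosDef)
    (hC : C.PosSemidef) (hCdef : C = P⁻¹ * Bm * P⁻¹) {s x : Fin n → ℝ}
    (hAs : (P * P) *ᵥ s = x) (hBs : Bm *ᵥ s = x) :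
    (P * msqrt C * P) *ᵥ s = x := by
  have hPdet : IsUnit P.det := isUnit_iff_ne_zero.mpr hP.det_pos.ne'
  have hinv : P⁻¹ * P = 1 := Matrix.nonsing_inv_mul P hPdet
  have h1 : P *ᵥ s = P⁻¹ *ᵥ x := by
    rw [← hAs, mulVec_mulVec, ← mul_assoc, hinv, one_mul]
  have h2 : C *ᵥ (P *ᵥ s) = P *ᵥ s := by
    rw [hCdef, mulVec_mulVec, mul_assoc, hinv, mul_one, ← mulVec_mulVec, hBs, h1]
  have h3 : msqrt C *ᵥ (P *ᵥ s) = P *ᵥ s := by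
    apply sqrt_fixed (msqrt_posSemidef hC)
    rw [msqrt_mul_self hC, h2]
  calc (P * msqrt C * P) *ᵥ s = P *ᵥ (msqrt C *ᵥ (P *ᵥ s)) := by
        rw [mulVec_mulVec, mulVec_mulVec]
    _ = (P * P) *ᵥ s := by rw [h3, mulVec_mulVec]
    _ = x := hAs

/-- The operator geometric mean of two local primal-dual metrics (both mapping
`s` to `x` and `s̃` to `x̃`) is again a local primal-dual metric. -/
theorem stmt_13 (n : ℕ) (x xt s st : Fin n → ℝ)
    (A B : Matrix (Fin n) (Fin n) ℝ) (hA : A.PosDef) (hB : B.PosDef)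
    (hAs : A *ᵥ s = x) (hBs : B *ᵥ s = x)
    (hAst : A *ᵥ st = xt) (hBst : B *ᵥ st = xt)
    (G : Matrix (Fin n) (Fin n) ℝ)
    (hG : G = msqrt A * msqrt ((msqrt A)⁻¹ * B * (msqrt A)⁻¹) * msqrt A) :
    G.PosDef ∧ G *ᵥ s = x ∧ G *ᵥ st = xt := by
  set P := msqrt A with hPdef
  have hP : P.PosDef := msqrt_posDef hA
  have hPP : P * P = A := msqrt_mul_self hA.posSemidef
  have hPinv : P⁻¹.PosDef := hP.inv
  have hPinvH : (P⁻¹)ᴴ = P⁻¹ := hPinv.isHermitian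
  have hC : (P⁻¹ * B * P⁻¹).PosSemidef := by
    have := hB.posSemidef.conjTranspose_mul_mul_same P⁻¹
    rwa [hPinvH] at this
  have hCdet : (P⁻¹ * B * P⁻¹).det ≠ 0 := by
    rw [det_mul, det_mul]
    have hPi : P⁻¹.det ≠ 0 := hPinv.det_pos.ne'
    exact mul_ne_zero (mul_ne_zero hPi hB.det_pos.ne') hPi
  have hCpd : (P⁻¹ * B * P⁻¹).PosDef := posDef_of_posSemidef_det_ne_zero hC hCdet
  have hM : (msqrt (P⁻¹ * B * P⁻¹)).PosDef := msqrt_posDef hCpd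
  have hMH : (msqrt (P⁻¹ * B * P⁻¹))ᴴ = msqrt (P⁻¹ * B * P⁻¹) := hM.isHermitian
  have hPH : Pᴴ = P := hP.isHermitian
  constructor
  · rw [hG]
    apply posDef_of_posSemidef_det_ne_zero
    · have := hM.posSemidef.conjTranspose_mul_mul_same P
      rwa [hPH] at this
    · rw [det_mul, det_mul]
      have hPd : P.det ≠ 0 := hP.det_pos.ne'
      exact mul_ne_zero (mul_ne_zero hPd hM.det_pos.ne') hPd
  constructor
  · rw [hG]
    exact gen_vec hP hC rfl (by rw [hPP]; exact hAs) hBs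
  · rw [hG]
    exact gen_vec hP hC rfl (by rw [hPP]; exact hAst) hBst
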